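/- arXiv:0709.2947 — 3 statements merged into one kernel-verified Lean document; each statement's English description precedes it below -/
import Mathlib

section
/- For all positive integers n and N, ∑ b_{j_1} b_{j_2} ⋯ b_{j_N} = ∑_{k=0}^{N-1} a_k^{(N)}(n) · b_{n-k}, where the sum on the left ranges over all N-tuples (j_1, …, j_N) of nonnegative integers with j_1 + j_2 + ⋯ + j_N = n, and where by convention b_m = 0 for m < 0. -/
open Polynomial

/-- Bernoulli numbers of the second kind: `b 0 = 1` and for `n ≥ 1`,
`b n = -∑_{k=1}^{n} (-1)^k b_{n-k}/(k+1)`. -/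
def bernoulliSnd : ℕ → ℚ
  | 0 => 1
  | n + 1 =>
      -∑ k ∈ Finset.range (n + 1),
        (-1 : ℚ) ^ (k + 1) * bernoulliSnd (n - k) / (k + 2)
  decreasing_by exact Nat.lt_succ_of_le (Nat.sub_le n k)

/-- Extension of the Bernoulli numbers of the second kind to integer indices,
with `b m = 0` for `m < 0`. -/
def bernoulliSndInt (m : ℤ) : ℚ :=
  if m < 0 then 0 else bernoulliSnd m.toNat

/-- The array of polynomials `a_k^{(N)}(x)` (here `dilcherA N k`): `a_0^{(1)} = 1`,
`a_k^{(N)} = 0` for `k < 0` or `k ≥ N`, and for `N ≥ 2` and `0 ≤ k < N`,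
`a_k^{(N)}(x) = -(1/(N-1)) ((x-N+1) a_k^{(N-1)}(x) + (x-N) a_{k-1}^{(N-1)}(x-1))`. -/
noncomputable def dilcherA : ℕ → ℤ → Polynomial ℚ
  | 0, _ => 0
  | 1, k => if k = 0 then 1 else 0
  | N + 2, k =>
      if 0 ≤ k ∧ k < (N : ℤ) + 2 then
        Polynomial.C (-(1 / ((N : ℚ) + 1))) *
          ((Polynomial.X - Polynomial.C ((N : ℚ) + 1)) * dilcherA (N + 1) k
            + (Polynomial.X - Polynomial.C ((N : ℚ) + 2)) *
                (dilcherA (N + 1) (k - 1)).comp (Polynomial.X - 1))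
      else 0

noncomputable def Bps : PowerSeries ℚ := PowerSeries.mk bernoulliSnd

noncomputable def Lps : PowerSeries ℚ := PowerSeries.mk fun k => (-1 : ℚ) ^ k / (k + 1)

lemma BL_eq_one : Bps * Lps = 1 := by
  ext n
  rw [PowerSeries.coeff_mul]
  cases n with
  | zero =>
      simp [Bps, Lps, bernoulliSnd]
  | succ n =>
      rw [Finset.Nat.sum_antidiagonal_eq_sum_range_succ
        (fun a b => PowerSeries.coeff a Bps * PowerSeries.coeff b Lps) (n+1)]
      simp only [Bps, Lps, PowerSeries.coeff_mk]
      rw [Finset.sum_range_succ, ← Finset.sum_range_reflect]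
      have h1 : ∀ j ∈ Finset.range (n+1),
          bernoulliSnd (n + 1 - 1 - j) *
            ((-1:ℚ) ^ (n + 1 - (n + 1 - 1 - j)) / ((n + 1 - (n + 1 - 1 - j) : ℕ) + 1))
          = (-1:ℚ)^(j+1) * bernoulliSnd (n - j) / (j + 2) := by
        intro j hj
        rw [Finset.mem_range] at hj
        have e1 : n + 1 - 1 - j = n - j := by omega
        have e2 : n + 1 - (n - j) = j + 1 := by omega
        rw [e1, e2]
        push_cast
        ring
      rw [Finset.sum_congr rfl h1]
      rw [show bernoulliSnd (n+1) = -∑ k ∈ Finset.range (n + 1),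
          (-1 : ℚ) ^ (k + 1) * bernoulliSnd (n - k) / (k + 2) from by rw [bernoulliSnd]]
      simp [PowerSeries.coeff_one]

lemma coeff_XXD (h : PowerSeries ℚ) (m : ℕ) :
    PowerSeries.coeff (m+1)
      (PowerSeries.X * (1 + PowerSeries.X) * PowerSeries.derivative ℚ h)
    = (m+1) * PowerSeries.coeff (m+1) h + m * PowerSeries.coeff m h := by
  have e : PowerSeries.X * (1 + PowerSeries.X) * PowerSeries.derivative ℚ h
      = PowerSeries.X * (PowerSeries.derivative ℚ h
          + PowerSeries.X * PowerSeries.derivative ℚ h) := by ring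
  rw [e, PowerSeries.coeff_succ_X_mul, map_add, PowerSeries.coeff_derivative]
  cases m with
  | zero => simp
  | succ p =>
      rw [PowerSeries.coeff_succ_X_mul, PowerSeries.coeff_derivative]
      push_cast
      ring

lemma Lode : PowerSeries.X * (1 + PowerSeries.X) * PowerSeries.derivative ℚ Lps
    = 1 - (1 + PowerSeries.X) * Lps := by
  ext n
  cases n with
  | zero =>
      rw [mul_assoc, PowerSeries.coeff_zero_X_mul]
      simp [Lps, add_mul, PowerSeries.coeff_zero_X_mul]
  | succ m =>
      rw [coeff_XXD]
      simp only [Lps, PowerSeries.coeff_mk, map_sub, add_mul, map_add, one_mul,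
        PowerSeries.coeff_succ_X_mul, PowerSeries.coeff_one, Nat.succ_ne_zero, if_false]
      have h1 : ((m:ℚ)+1) + 1 ≠ 0 := by positivity
      have h2 : ((m:ℚ)) + 1 ≠ 0 := by positivity
      rw [pow_succ]
      push_cast
      field_simp
      ring

lemma Lps_ne_zero : Lps ≠ 0 := by
  intro h
  have := congrArg (PowerSeries.coeff 0) h
  simp [Lps] at this

lemma Bode : PowerSeries.X * (1 + PowerSeries.X) * PowerSeries.derivative ℚ Bps
    = (1 + PowerSeries.X) * Bps - Bps ^ 2 := by
  have hFL : Bps * Lps = 1 := BL_eq_one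
  have hD : PowerSeries.derivative ℚ Bps * Lps + Bps * PowerSeries.derivative ℚ Lps = 0 := by
    have := congrArg (PowerSeries.derivative ℚ) hFL
    rw [Derivation.leibniz, Derivation.map_one_eq_zero] at this
    simpa [smul_eq_mul, mul_comm, add_comm] using this
  have hLode := Lode
  apply mul_left_cancel₀ (mul_ne_zero Lps_ne_zero Lps_ne_zero)
  linear_combination (Lps * PowerSeries.X * (1 + PowerSeries.X)) * hD
    + (-(Bps * Lps)) * hLode + (Bps * Lps) * hFL

lemma Bpow_ode (N : ℕ) (hN : 1 ≤ N) :
    PowerSeries.X * (1 + PowerSeries.X) * PowerSeries.derivative ℚ (Bps ^ N)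
    = N • ((1 + PowerSeries.X) * Bps ^ N - Bps ^ (N + 1)) := by
  rw [Derivation.leibniz_pow]
  have e : PowerSeries.X * (1 + PowerSeries.X) *
      (N • Bps ^ (N-1) • PowerSeries.derivative ℚ Bps)
      = N • (Bps ^ (N-1) * (PowerSeries.X * (1 + PowerSeries.X) *
          PowerSeries.derivative ℚ Bps)) := by
    simp only [smul_eq_mul, smul_smul, nsmul_eq_mul]
    ring
  rw [e, Bode]
  congr 1
  have hB : Bps ^ (N - 1) * Bps = Bps ^ N := by
    rw [← pow_succ, Nat.sub_add_cancel hN]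
  calc Bps ^ (N-1) * ((1 + PowerSeries.X) * Bps - Bps ^ 2)
      = (1 + PowerSeries.X) * (Bps ^ (N-1) * Bps) - (Bps ^ (N-1) * Bps) * Bps := by ring
    _ = (1 + PowerSeries.X) * Bps ^ N - Bps ^ (N + 1) := by rw [hB, ← pow_succ]

/-- The key coefficient recurrence. -/
lemma coeff_pow_succ (N : ℕ) (hN : 1 ≤ N) (m : ℕ) :
    PowerSeries.coeff (m+1) (Bps ^ (N+1))
    = PowerSeries.coeff (m+1) (Bps ^ N) + PowerSeries.coeff m (Bps ^ N)
      - (1 / N) * ((m+1) * PowerSeries.coeff (m+1) (Bps ^ N)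
          + m * PowerSeries.coeff m (Bps ^ N)) := by
  have h := congrArg (PowerSeries.coeff (m+1)) (Bpow_ode N hN)
  rw [coeff_XXD, map_nsmul, map_sub] at h
  have hc : PowerSeries.coeff (m+1) ((1 + PowerSeries.X) * Bps ^ N)
      = PowerSeries.coeff (m+1) (Bps ^ N) + PowerSeries.coeff m (Bps ^ N) := by
    rw [add_mul, one_mul, map_add, PowerSeries.coeff_succ_X_mul]
  rw [hc, nsmul_eq_mul] at h
  have hN0 : (N : ℚ) ≠ 0 := by
    exact_mod_cast Nat.cast_ne_zero.mpr (Nat.one_le_iff_ne_zero.mp hN)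
  field_simp
  linarith [h]

lemma lhs_eq_coeff (N n : ℕ) :
    ∑ j ∈ Finset.Nat.antidiagonalTuple N n, ∏ i : Fin N, bernoulliSnd (j i)
    = PowerSeries.coeff n (Bps ^ N) := by
  have hpow : Bps ^ N = ∏ _i : Fin N, Bps := by
    rw [Finset.prod_const, Finset.card_univ, Fintype.card_fin]
  rw [hpow, PowerSeries.coeff_prod]
  refine Finset.sum_nbij' (fun g => Finsupp.equivFunOnFinite.symm g)
    (fun l => ⇑l) ?_ ?_ ?_ ?_ ?_
  · intro g hg
    rw [Finset.Nat.mem_antidiagonalTuple] at hg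
    rw [Finset.mem_finsuppAntidiag]
    exact ⟨by simpa using hg, Finset.subset_univ _⟩
  · intro l hl
    rw [Finset.mem_finsuppAntidiag] at hl
    rw [Finset.Nat.mem_antidiagonalTuple]
    simpa using hl.1
  · intro g _; exact Equiv.apply_symm_apply Finsupp.equivFunOnFinite g
  · intro l _; simp
  · intro g _
    simp [Bps]

lemma dilcherA_eq_zero (N : ℕ) (k : ℤ) (h : k < 0 ∨ (N : ℤ) ≤ k) : dilcherA N k = 0 := by
  match N with
  | 0 => rw [dilcherA]
  | 1 =>
      have hk : k ≠ 0 := by omega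
      rw [dilcherA, if_neg hk]
  | (M + 2) =>
      rw [dilcherA, if_neg]
      push_cast at h
      omega

lemma dilcherA_succ_eval (N : ℕ) (hN : 1 ≤ N) (k : ℤ) (hk : 0 ≤ k) (hk2 : k < (N : ℤ) + 1)
    (x : ℚ) :
    (dilcherA (N + 1) k).eval x
    = -(1 / (N : ℚ)) * ((x - N) * (dilcherA N k).eval x
        + (x - (N + 1)) * (dilcherA N (k - 1)).eval (x - 1)) := by
  obtain ⟨M, rfl⟩ := Nat.exists_eq_add_of_le hN
  rw [show 1 + M + 1 = M + 2 from by ring, dilcherA, if_pos ⟨hk, by push_cast at hk2 ⊢; omega⟩]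
  simp only [eval_mul, eval_add, eval_sub, eval_C, eval_X, eval_comp, eval_one]
  push_cast
  ring_nf

lemma dilcherA_zero_eval_zero (N : ℕ) (hN : 1 ≤ N) : (dilcherA N 0).eval 0 = 1 := by
  induction N, hN using Nat.le_induction with
  | base => simp [dilcherA]
  | succ N hN ih =>
      rw [dilcherA_succ_eval N hN 0 le_rfl (by positivity)]
      rw [show (0:ℤ) - 1 = -1 from rfl, dilcherA_eq_zero N (-1) (Or.inl (by norm_num))]
      have hN0 : (N : ℚ) ≠ 0 := Nat.cast_ne_zero.mpr (Nat.one_le_iff_ne_zero.mp hN)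
      rw [ih]
      simp only [Polynomial.eval_zero, mul_zero, add_zero, mul_one]
      field_simp
      ring

lemma bInt_natCast (n : ℕ) : bernoulliSndInt (n : ℤ) = bernoulliSnd n := by
  rw [bernoulliSndInt, if_neg (Int.not_lt.mpr (Int.natCast_nonneg n)), Int.toNat_natCast]

lemma key : ∀ N, 1 ≤ N → ∀ n : ℕ,
    PowerSeries.coeff n (Bps ^ N)
    = ∑ k ∈ Finset.range N,
        (dilcherA N (k : ℤ)).eval (n : ℚ) * bernoulliSndInt ((n : ℤ) - (k : ℤ)) := by
  intro N hN
  induction N, hN using Nat.le_induction with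
  | base =>
      intro n
      rw [pow_one, Finset.sum_range_one]
      simp only [Nat.cast_zero, sub_zero, bInt_natCast]
      rw [show dilcherA 1 0 = 1 from by rw [dilcherA]; simp]
      simp [Bps]
  | succ N hN ih =>
      intro n
      have hN0 : (N : ℚ) ≠ 0 := Nat.cast_ne_zero.mpr (Nat.one_le_iff_ne_zero.mp hN)
      cases n with
      | zero =>
          have hL : PowerSeries.coeff 0 (Bps ^ (N+1)) = 1 := by
            rw [PowerSeries.coeff_zero_eq_constantCoeff, map_pow]
            have : PowerSeries.constantCoeff Bps = 1 := by
              simp [Bps, ← PowerSeries.coeff_zero_eq_constantCoeff, bernoulliSnd]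
            rw [this, one_pow]
          rw [hL, Finset.sum_eq_single 0]
          · have hb : bernoulliSndInt 0 = 1 := by
              rw [bernoulliSndInt, if_neg (by norm_num), Int.toNat_zero, bernoulliSnd]
            simp only [Nat.cast_zero, sub_zero, hb, mul_one]
            rw [dilcherA_zero_eval_zero (N+1) (by omega)]
          · intro k _ hk
            have : bernoulliSndInt (((0:ℕ):ℤ) - (k:ℤ)) = 0 := by
              rw [bernoulliSndInt, if_pos (by push_cast; omega)]
            rw [this, mul_zero]
          · intro h; exact absurd (Finset.mem_range.mpr (by omega)) h
      | succ m =>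
          rw [coeff_pow_succ N hN m, ih (m+1), ih m]
          have hstep : ∀ k ∈ Finset.range (N+1),
              (dilcherA (N+1) (k:ℤ)).eval ((m+1:ℕ):ℚ)
                * bernoulliSndInt (((m+1:ℕ):ℤ) - (k:ℤ))
              = -(1/(N:ℚ)) * (((m:ℚ)+1 - N) *
                  ((dilcherA N (k:ℤ)).eval ((m+1:ℕ):ℚ)
                    * bernoulliSndInt (((m+1:ℕ):ℤ) - (k:ℤ)))
                + ((m:ℚ)+1 - (N+1)) *
                  ((dilcherA N ((k:ℤ)-1)).eval (((m+1:ℕ):ℚ) - 1)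
                    * bernoulliSndInt (((m+1:ℕ):ℤ) - (k:ℤ)))) := by
            intro k hk
            rw [Finset.mem_range] at hk
            rw [dilcherA_succ_eval N hN (k:ℤ) (by positivity) (by exact_mod_cast hk)]
            push_cast
            ring
          rw [Finset.sum_congr rfl hstep]
          rw [← Finset.mul_sum, Finset.sum_add_distrib, ← Finset.mul_sum, ← Finset.mul_sum]
          -- first inner sum : drop the vanishing top term
          rw [Finset.sum_range_succ (fun k =>
              (dilcherA N (k:ℤ)).eval ((m+1:ℕ):ℚ) * bernoulliSndInt (((m+1:ℕ):ℤ) - (k:ℤ))) N]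
          rw [dilcherA_eq_zero N (N:ℤ) (Or.inr le_rfl)]
          -- second inner sum : shift the index
          rw [Finset.sum_range_succ' (fun k =>
              (dilcherA N ((k:ℤ)-1)).eval (((m+1:ℕ):ℚ) - 1)
                * bernoulliSndInt (((m+1:ℕ):ℤ) - (k:ℤ))) N]
          rw [show ((0:ℕ):ℤ) - 1 = -1 from by simp,
            dilcherA_eq_zero N (-1) (Or.inl (by norm_num))]
          simp only [Polynomial.eval_zero, zero_mul, mul_zero, add_zero, zero_add]
          have hshift : ∀ k ∈ Finset.range N,
              (dilcherA N (((k+1:ℕ):ℤ) - 1)).eval (((m+1:ℕ):ℚ) - 1)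
                * bernoulliSndInt (((m+1:ℕ):ℤ) - ((k+1:ℕ):ℤ))
              = (dilcherA N (k:ℤ)).eval ((m:ℕ):ℚ)
                * bernoulliSndInt (((m:ℕ):ℤ) - (k:ℤ)) := by
            intro k _
            have e1 : ((k+1:ℕ):ℤ) - 1 = (k:ℤ) := by push_cast; ring
            have e2 : ((m+1:ℕ):ℚ) - 1 = ((m:ℕ):ℚ) := by push_cast; ring
            have e3 : ((m+1:ℕ):ℤ) - ((k+1:ℕ):ℤ) = ((m:ℕ):ℤ) - (k:ℤ) := by push_cast; ring
            rw [e1, e2, e3]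
          rw [Finset.sum_congr rfl hshift]
          field_simp
          ring

theorem sum_prod_bernoulliSnd (n N : ℕ) (hn : 0 < n) (hN : 0 < N) :
    ∑ j ∈ Finset.Nat.antidiagonalTuple N n, ∏ i : Fin N, bernoulliSnd (j i) =
      ∑ k ∈ Finset.range N,
        (dilcherA N (k : ℤ)).eval (n : ℚ) * bernoulliSndInt ((n : ℤ) - (k : ℤ)) := by
  rw [lhs_eq_coeff]
  exact key N hN n
end

section
/- For all positive integers n, ∑_{k=0}^{n} b_k b_{n-k} = -(n-1) b_n - (n-2) b_{n-1}, where by convention b_m = 0 for m < 0. -/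
open PowerSeries Finset

/-- `F = ∑ bₙ Xⁿ = X / log(1+X)`. -/
noncomputable def bernoulliSndPS : ℚ⟦X⟧ := PowerSeries.mk bernoulliSnd

/-- `G = log(1+X) / X`. -/
noncomputable def logDivPS : ℚ⟦X⟧ := PowerSeries.mk fun k => (-1 : ℚ)^k / (k+1)

local notation "F" => bernoulliSndPS
local notation "G" => logDivPS

lemma bernoulliSnd_key (n : ℕ) :
    ∑ k ∈ range (n+2), bernoulliSnd k * ((-1:ℚ)^(n+1-k) / (↑(n+1-k)+1)) = 0 := by
  rw [sum_range_succ]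
  have hlast : bernoulliSnd (n+1) * ((-1:ℚ)^(n+1-(n+1)) / (↑(n+1-(n+1))+1))
      = bernoulliSnd (n+1) := by simp
  rw [hlast]
  rw [← Finset.sum_range_reflect]
  have hterm : ∀ j ∈ range (n+1),
      bernoulliSnd (n+1-1-j) * ((-1:ℚ)^(n+1-(n+1-1-j)) / (↑(n+1-(n+1-1-j))+1))
        = (-1:ℚ)^(j+1) * bernoulliSnd (n-j) / (↑j+2) := by
    intro j hj
    rw [Finset.mem_range] at hj
    have h1 : n + 1 - 1 - j = n - j := by omega
    have h2 : n + 1 - (n - j) = j + 1 := by omega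
    rw [h1, h2]
    push_cast
    ring
  rw [Finset.sum_congr rfl hterm]
  have h : bernoulliSnd (n+1)
      = -∑ k ∈ Finset.range (n + 1), (-1:ℚ)^(k+1) * bernoulliSnd (n - k) / (↑k + 2) := by
    rw [bernoulliSnd]
  rw [h]; ring

lemma hFG : F * G = 1 := by
  ext n
  rw [coeff_mul, Finset.Nat.sum_antidiagonal_eq_sum_range_succ_mk]
  simp only [bernoulliSndPS, logDivPS, coeff_mk]
  cases n with
  | zero => simp [bernoulliSnd]
  | succ n =>
    rw [PowerSeries.coeff_one, if_neg (Nat.succ_ne_zero n)]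
    have := bernoulliSnd_key n
    simpa using this

lemma hH : G + X * (PowerSeries.derivative ℚ G) = PowerSeries.mk fun k => (-1:ℚ)^k := by
  ext n
  cases n with
  | zero => simp [logDivPS]
  | succ n =>
    rw [map_add, PowerSeries.coeff_succ_X_mul, PowerSeries.coeff_derivative]
    simp only [logDivPS, coeff_mk]
    have h2 : ((n:ℚ)+1)+1 ≠ 0 := by positivity
    field_simp
    push_cast
    ring

lemma hG : (1 + X) * (G + X * (PowerSeries.derivative ℚ G)) = 1 := by
  rw [hH]
  ext n
  rw [add_mul, one_mul, map_add]
  cases n with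
  | zero => simp
  | succ n =>
    rw [PowerSeries.coeff_succ_X_mul]
    simp [pow_succ]

lemma hd : (PowerSeries.derivative ℚ F) * G + F * (PowerSeries.derivative ℚ G) = 0 := by
  have h := congrArg (PowerSeries.derivative ℚ) hFG
  rw [Derivation.leibniz] at h
  rw [show ((PowerSeries.derivative ℚ) (1:ℚ⟦X⟧)) = 0 from
    (PowerSeries.derivative ℚ).map_one_eq_zero] at h
  simpa [smul_eq_mul, mul_comm, add_comm] using h

lemma hkey : F * F = (1+X)*F - X*(1+X)*(PowerSeries.derivative ℚ F) := by
  linear_combination ((1+X)*F - X*(1+X)*(PowerSeries.derivative ℚ F))*hFG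
    + (-(F*F))*hG + (X*(1+X)*F)*hd

theorem sum_mul_bernoulliSnd (n : ℕ) (hn : 0 < n) :
    ∑ k ∈ Finset.range (n + 1), bernoulliSnd k * bernoulliSnd (n - k) =
      -((n : ℚ) - 1) * bernoulliSnd n
        - ((n : ℚ) - 2) * bernoulliSndInt ((n : ℤ) - 1) := by
  match n, hn with
  | 1, _ =>
    have h1 : bernoulliSnd 1 = 1/2 := by
      rw [bernoulliSnd]; simp [bernoulliSnd]; norm_num
    have h0 : bernoulliSnd 0 = 1 := by rw [bernoulliSnd]
    simp [Finset.sum_range_succ, h0, h1, bernoulliSndInt]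
    norm_num
  | (m+2), _ =>
    have hc := congrArg (PowerSeries.coeff (R := ℚ) (m+2)) hkey
    rw [coeff_mul, Finset.Nat.sum_antidiagonal_eq_sum_range_succ_mk] at hc
    have e1 : (1+X)*F - X*(1+X)*(PowerSeries.derivative ℚ F)
        = (F + X*F) - (X*(PowerSeries.derivative ℚ F)
            + X*(X*(PowerSeries.derivative ℚ F))) := by ring
    rw [e1, map_sub, map_add, map_add, PowerSeries.coeff_succ_X_mul,
      PowerSeries.coeff_succ_X_mul, PowerSeries.coeff_succ_X_mul,
      PowerSeries.coeff_derivative, PowerSeries.coeff_succ_X_mul,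
      PowerSeries.coeff_derivative] at hc
    simp only [bernoulliSndPS, coeff_mk] at hc
    have hInt : bernoulliSndInt ((((m+2:ℕ)):ℤ) - 1) = bernoulliSnd (m+1) := by
      have h : (((m+2:ℕ)):ℤ) - 1 = ((m+1:ℕ):ℤ) := by push_cast; ring
      rw [h, bernoulliSndInt, if_neg (not_lt.mpr (Int.natCast_nonneg _)), Int.toNat_natCast]
    rw [hInt]
    push_cast at hc ⊢
    linear_combination hc
end

section
/- For all positive integers n, ∑ b_{j_1} b_{j_2} b_{j_3}, where the sum ranges over all triples (j_1, j_2, j_3) of nonnegative integers with j_1 + j_2 + j_3 = n, equals (1/2)(n-1)(n-2) b_n + (1/2)(n-2)(2n-5) b_{n-1} + (1/2)(n-3)^2 b_{n-2}, where by convention b_m = 0 for m < 0. -/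
open PowerSeries Finset

noncomputable def Bs : ℚ⟦X⟧ := PowerSeries.mk bernoulliSnd
noncomputable def Ls : ℚ⟦X⟧ := PowerSeries.mk (fun k => (-1 : ℚ)^k / (k+1))

lemma BL : Bs * Ls = 1 := by
  ext n
  cases n with
  | zero =>
    simp [Bs, Ls, coeff_mul, Finset.Nat.antidiagonal_zero, bernoulliSnd]
  | succ n =>
    rw [coeff_mul]
    rw [Finset.Nat.sum_antidiagonal_eq_sum_range_succ_mk]
    rw [Finset.sum_range_succ]
    have h1 : ∑ k ∈ Finset.range (n + 1),
        (coeff k Bs) * (coeff (n + 1 - k) Ls)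
        = ∑ k ∈ Finset.range (n + 1),
          (coeff (n - k) Bs) * (coeff (k + 1) Ls) := by
      rw [← Finset.sum_range_reflect]
      apply Finset.sum_congr rfl
      intro j hj
      simp only [Finset.mem_range] at hj
      have e1 : n + 1 - 1 - j = n - j := by omega
      have e2 : n + 1 - (n + 1 - 1 - j) = j + 1 := by omega
      rw [e2, e1]
    rw [h1]
    have h2 : (coeff (n+1)) Bs * (coeff (n + 1 - (n+1))) Ls = bernoulliSnd (n+1) := by
      simp [Bs, Ls]
    rw [h2]
    have h3 : ∑ k ∈ Finset.range (n + 1),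
          (coeff (n - k) Bs) * (coeff (k + 1) Ls)
        = ∑ k ∈ Finset.range (n + 1),
          (-1 : ℚ) ^ (k + 1) * bernoulliSnd (n - k) / (k + 2) := by
      apply Finset.sum_congr rfl
      intro k _
      simp only [Bs, Ls, coeff_mk]
      push_cast
      ring
    rw [h3]
    have h4 : bernoulliSnd (n+1) = -∑ k ∈ Finset.range (n + 1),
        (-1 : ℚ) ^ (k + 1) * bernoulliSnd (n - k) / (k + 2) := by
      rw [bernoulliSnd]
    rw [h4]
    simp

noncomputable abbrev dd (f : ℚ⟦X⟧) : ℚ⟦X⟧ := PowerSeries.derivative ℚ f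

lemma Lkey : (1 + X) * (Ls + X * dd Ls) = 1 := by
  have hM : ∀ k, coeff k (Ls + X * dd Ls) = (-1 : ℚ)^k := by
    intro k
    cases k with
    | zero => simp [Ls]
    | succ k =>
      rw [map_add, coeff_succ_X_mul, coeff_derivative]
      simp only [Ls, coeff_mk]
      have h1 : ((k:ℚ)+1+1) ≠ 0 := by positivity
      field_simp
      push_cast
      ring
  ext n
  rw [add_mul, one_mul, map_add]
  cases n with
  | zero => simp [hM 0, Ls]
  | succ n =>
    rw [coeff_succ_X_mul, hM, hM]
    simp [pow_succ]

lemma hLne : Ls ≠ 0 := by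
  intro h
  have := BL
  rw [h, mul_zero] at this
  exact one_ne_zero this.symm

lemma hder : Bs * dd Ls + Ls * dd Bs = 0 := by
  have h := congrArg dd BL
  simp only [dd] at h ⊢
  rwa [Derivation.leibniz, smul_eq_mul, smul_eq_mul, Derivation.map_one_eq_zero] at h

lemma key2 : Bs^2 = (1 + X) * (Bs - X * dd Bs) := by
  apply mul_right_cancel₀ (pow_ne_zero 2 hLne)
  linear_combination (Bs*Ls) * BL + (X*(1+X)*Ls) * hder - (Bs*Ls) * Lkey

lemma hE : 2*(Bs * dd Bs) = Bs - X * dd Bs - X*(1+X)* dd (dd Bs) := by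
  have h := congrArg dd key2
  simp only [dd] at h ⊢
  rw [sq, Derivation.leibniz, Derivation.leibniz, map_sub, Derivation.leibniz,
    derivative_X, map_add, Derivation.map_one_eq_zero] at h
  simp only [smul_eq_mul, mul_one, zero_add, mul_zero, add_zero] at h
  rw [derivative_X] at h
  linear_combination h

lemma key3 : 2*Bs^3 = (1+X)*((2+X)*(Bs - X*dd Bs) + X^2*(1+X)*dd (dd Bs)) := by
  linear_combination (2*Bs + 2*(1+X)) * key2 - (X*(1+X)) * hE

lemma expand : 2*Bs^3 = 2*Bs + 3*(X*Bs) + X*(X*Bs) - 2*(X*dd Bs) - 3*(X*(X*dd Bs))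
    - X*(X*(X*dd Bs)) + X*(X*dd (dd Bs)) + 2*(X*(X*(X*dd (dd Bs))))
    + X*(X*(X*(X*dd (dd Bs)))) := by
  linear_combination key3

lemma coeff_B3 (n : ℕ) : coeff n (Bs^3) =
    ∑ j ∈ Finset.Nat.antidiagonalTuple 3 n,
      bernoulliSnd (j 0) * bernoulliSnd (j 1) * bernoulliSnd (j 2) := by
  have h : Bs^3 = Bs * (Bs * Bs) := by ring
  rw [h, coeff_mul]
  simp_rw [coeff_mul, Finset.mul_sum]
  rw [Finset.sum_sigma']
  apply Finset.sum_nbij' (i := fun (x : (_ : ℕ × ℕ) × (ℕ × ℕ)) => ![x.1.1, x.2.1, x.2.2])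
    (j := fun j => ⟨(j 0, j 1 + j 2), (j 1, j 2)⟩)
  · intro x hx
    simp only [Finset.mem_sigma, Finset.HasAntidiagonal.mem_antidiagonal] at hx
    simp only [Finset.Nat.mem_antidiagonalTuple, Fin.sum_univ_three]
    simp only [Matrix.cons_val_zero, Matrix.cons_val_one, Matrix.head_cons,
      Matrix.cons_val_two, Matrix.tail_cons]
    omega
  · intro j hj
    simp only [Finset.Nat.mem_antidiagonalTuple, Fin.sum_univ_three] at hj
    refine Finset.mem_sigma.mpr ⟨?_, ?_⟩ <;> simp only [Finset.HasAntidiagonal.mem_antidiagonal] <;> omega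
  · intro x hx
    simp only [Finset.mem_sigma, Finset.HasAntidiagonal.mem_antidiagonal] at hx
    ext : 1 <;> simp only [Matrix.cons_val_zero, Matrix.cons_val_one, Matrix.head_cons,
      Matrix.cons_val_two, Matrix.tail_cons]
    · rw [Prod.ext_iff]; constructor <;> simp [hx.2]
    · simp
  · intro j hj
    funext i
    fin_cases i <;> rfl
  · intro x hx
    simp only [Bs, coeff_mk, Matrix.cons_val_zero, Matrix.cons_val_one, Matrix.head_cons,
      Matrix.cons_val_two, Matrix.tail_cons]
    ring

lemma cB (n : ℕ) : coeff n Bs = bernoulliSnd n := coeff_mk n _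

lemma cdB (n : ℕ) : coeff n (dd Bs) = bernoulliSnd (n+1) * ((n:ℚ)+1) := by
  rw [dd, coeff_derivative, cB]

lemma cd2B (n : ℕ) : coeff n (dd (dd Bs)) = bernoulliSnd (n+2) * ((n:ℚ)+2) * ((n:ℚ)+1) := by
  rw [dd, coeff_derivative, cdB]
  push_cast
  ring

lemma expandC : C (2:ℚ) * Bs^3 = C 2 * Bs + C 3 * (X^1*Bs) + X^2*Bs
    - C 2*(X^1*dd Bs) - C 3*(X^2*dd Bs) - X^3*dd Bs
    + X^2*dd (dd Bs) + C 2*(X^3*dd (dd Bs)) + X^4*dd (dd Bs) := by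
  have h2 : (C (2:ℚ) : ℚ⟦X⟧) = 2 := by rw [map_ofNat]
  have h3 : (C (3:ℚ) : ℚ⟦X⟧) = 3 := by rw [map_ofNat]
  rw [h2, h3]
  linear_combination key3

lemma coeff_two_B3 (n : ℕ) (hn : 0 < n) :
    coeff n (C 2 * Bs^3)
      = ((n : ℚ) - 1) * ((n : ℚ) - 2) * bernoulliSnd n
        + ((n : ℚ) - 2) * (2 * (n : ℚ) - 5) * bernoulliSndInt ((n : ℤ) - 1)
        + ((n : ℚ) - 3) ^ 2 * bernoulliSndInt ((n : ℤ) - 2) := by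
  rw [expandC]
  simp only [map_add, map_sub, coeff_C_mul, coeff_X_pow_mul']
  obtain _|_|_|_|m := n
  · exact absurd hn (lt_irrefl 0)
  · norm_num [cB, cdB, cd2B, bernoulliSndInt]
    try ring
  · norm_num [cB, cdB, cd2B, bernoulliSndInt, Int.toNat_natCast]
    try ring
    try rfl
  · norm_num [cB, cdB, cd2B, bernoulliSndInt, Int.toNat_natCast]
    try ring
    try rfl
  ·
    have h1 : (1:ℕ) ≤ m+4 := by omega
    have h2 : (2:ℕ) ≤ m+4 := by omega
    have h3 : (3:ℕ) ≤ m+4 := by omega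
    have h4 : (4:ℕ) ≤ m+4 := by omega
    rw [if_pos h1, if_pos h2, if_pos h1, if_pos h2, if_pos h3, if_pos h2, if_pos h3, if_pos h4]
    have e1 : m+4-1 = m+3 := by omega
    have e2 : m+4-2 = m+2 := by omega
    have e3 : m+4-3 = m+1 := by omega
    have e4 : m+4-4 = m := by omega
    rw [e1, e2, e3, e4]
    have i1 : bernoulliSndInt ((m:ℤ)+3) = bernoulliSnd (m+3) := by
      rw [bernoulliSndInt, if_neg (by omega), show ((m:ℤ)+3).toNat = m+3 from by omega]
    have i2 : bernoulliSndInt ((m:ℤ)+2) = bernoulliSnd (m+2) := by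
      rw [bernoulliSndInt, if_neg (by omega), show ((m:ℤ)+2).toNat = m+2 from by omega]
    have j4 : m+1+1+1+1 = m+4 := rfl
    rw [j4]
    push_cast
    rw [show (m:ℤ)+4-1 = (m:ℤ)+3 from by ring, show (m:ℤ)+4-2 = (m:ℤ)+2 from by ring, i1, i2]
    simp only [cB, cdB, cd2B]
    push_cast
    ring

theorem sum_triple_mul_bernoulliSnd (n : ℕ) (hn : 0 < n) :
    ∑ j ∈ Finset.Nat.antidiagonalTuple 3 n,
        bernoulliSnd (j 0) * bernoulliSnd (j 1) * bernoulliSnd (j 2) =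
      (1 / 2) * ((n : ℚ) - 1) * ((n : ℚ) - 2) * bernoulliSnd n
        + (1 / 2) * ((n : ℚ) - 2) * (2 * (n : ℚ) - 5) * bernoulliSndInt ((n : ℤ) - 1)
        + (1 / 2) * ((n : ℚ) - 3) ^ 2 * bernoulliSndInt ((n : ℤ) - 2) := by
  have h2 := coeff_two_B3 n hn
  rw [coeff_C_mul, coeff_B3 n] at h2
  linear_combination h2 / 2
end
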